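/- Let Ã ∈ ℝ^{n×n}, B̃ ∈ ℝ^{n×m}, Ẽ ∈ ℝ^{n×p}, C̃ ∈ ℝ^{p×n}, D̃ ∈ ℝ^{p×m}. Suppose there exist L ∈ ℝ^{n×p} and a symmetric positive definite P₀ ∈ ℝ^{n×n} such that (Ã − L C̃)ᵀ P₀ (Ã − L C̃) − P₀ is negative definite. Then there exist a symmetric positive definite P_W ∈ ℝ^{n×n} and constants c_u, c_y, c_d > 0 such that for all ξ ∈ ℝⁿ, u ∈ ℝᵐ, d ∈ ℝᵖ, writing ξ⁺ := Ã ξ + B̃ u + Ẽ d and y := C̃ ξ + D̃ u + d, it holds that (ξ⁺)ᵀ P_W ξ⁺ − ξᵀ P_W ξ ≤ −(1/2)‖ξ‖² + c_u ‖u‖² + c_y ‖y‖² + c_d ‖d‖². -/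

import Mathlib

open Matrix

namespace IOSSAux

open scoped MatrixOrder

noncomputable abbrev _root_.Matrix.PosSemidef.sqrt {k : ℕ} {P : Matrix (Fin k) (Fin k) ℝ}
    (_hP : P.PosSemidef) : Matrix (Fin k) (Fin k) ℝ := CFC.sqrt P


lemma dot_self_nonneg {k : ℕ} (x : Fin k → ℝ) : 0 ≤ x ⬝ᵥ x :=
  Finset.sum_nonneg fun i _ => mul_self_nonneg _

lemma quad_upper {k : ℕ} (M : Matrix (Fin k) (Fin k) ℝ) :
    ∃ C : ℝ, 0 ≤ C ∧ ∀ x : Fin k → ℝ, x ⬝ᵥ M *ᵥ x ≤ C * (x ⬝ᵥ x) := by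
  refine ⟨∑ i, ∑ j, |M i j|, by positivity, fun x => ?_⟩
  have hsq : ∀ i : Fin k, x i ^ 2 ≤ x ⬝ᵥ x := fun i => by
    have := Finset.single_le_sum (f := fun i => x i * x i)
      (fun i _ => mul_self_nonneg (x i)) (Finset.mem_univ i)
    simpa [dotProduct, sq] using this
  have key : ∀ i j : Fin k, x i * (M i j * x j) ≤ |M i j| * (x ⬝ᵥ x) := by
    intro i j
    have h1 := hsq i
    have h2 := hsq j
    have h3 : x i * (M i j * x j) ≤ |M i j| * (|x i| * |x j|) := by
      calc x i * (M i j * x j) ≤ |x i * (M i j * x j)| := le_abs_self _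
        _ = |M i j| * (|x i| * |x j|) := by rw [abs_mul, abs_mul]; ring
    have h4 : |x i| * |x j| ≤ x ⬝ᵥ x := by
      nlinarith [sq_abs (x i), sq_abs (x j), abs_nonneg (x i), abs_nonneg (x j),
        sq_nonneg (|x i| - |x j|)]
    nlinarith [abs_nonneg (M i j)]
  calc x ⬝ᵥ M *ᵥ x = ∑ i, ∑ j, x i * (M i j * x j) := by
        simp [dotProduct, mulVec, Finset.mul_sum]
    _ ≤ ∑ i, ∑ j, |M i j| * (x ⬝ᵥ x) :=
        Finset.sum_le_sum fun i _ => Finset.sum_le_sum fun j _ => key i j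
    _ = (∑ i, ∑ j, |M i j|) * (x ⬝ᵥ x) := by
        simp [Finset.sum_mul]



lemma quad_lower {k : ℕ} {M : Matrix (Fin k) (Fin k) ℝ} (hM : M.PosDef) :
    ∃ c : ℝ, 0 < c ∧ ∀ x : Fin k → ℝ, c * (x ⬝ᵥ x) ≤ x ⬝ᵥ M *ᵥ x := by
  rcases Nat.eq_zero_or_pos k with hk | hk
  · subst hk
    exact ⟨1, one_pos, fun x => by simp [dotProduct, mulVec]⟩
  · have hf : Continuous fun x : Fin k → ℝ => x ⬝ᵥ M *ᵥ x := by
      simp only [dotProduct, mulVec]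
      exact continuous_finset_sum _ fun i _ => (continuous_apply i).mul
        (continuous_finset_sum _ fun j _ => continuous_const.mul (continuous_apply j))
    have hg : Continuous fun x : Fin k → ℝ => x ⬝ᵥ x := by
      simp only [dotProduct]
      exact continuous_finset_sum _ fun i _ => (continuous_apply i).mul (continuous_apply i)
    set s : Set (Fin k → ℝ) := {x | x ⬝ᵥ x = 1} with hs_def
    have hclosed : IsClosed s := isClosed_eq hg continuous_const
    have hbdd : Bornology.IsBounded s := by
      apply Bornology.IsBounded.subset (Metric.isBounded_closedBall (x := (0 : Fin k → ℝ)) (r := 1))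
      intro x hx
      simp only [Metric.mem_closedBall, dist_zero_right]
      rw [pi_norm_le_iff_of_nonneg zero_le_one]
      intro i
      have h1 : x i ^ 2 ≤ x ⬝ᵥ x := by
        have := Finset.single_le_sum (f := fun i => x i * x i)
          (fun i _ => mul_self_nonneg (x i)) (Finset.mem_univ i)
        simpa [dotProduct, sq] using this
      have : x i ^ 2 ≤ 1 := h1.trans_eq hx
      rw [Real.norm_eq_abs, ← Real.sqrt_one, ← Real.sqrt_sq_eq_abs]
      exact Real.sqrt_le_sqrt this
    have hcompact : IsCompact s := Metric.isCompact_of_isClosed_isBounded hclosed hbdd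
    have hne : s.Nonempty := by
      refine ⟨Pi.single ⟨0, hk⟩ (1 : ℝ), ?_⟩
      simp [hs_def, dotProduct, Pi.single_apply]
    obtain ⟨x₀, hx₀s, hmin⟩ := hcompact.exists_isMinOn hne hf.continuousOn
    have hx₀ne : x₀ ≠ 0 := by
      intro h
      rw [h] at hx₀s
      simp [hs_def, dotProduct] at hx₀s
    have hc : 0 < x₀ ⬝ᵥ M *ᵥ x₀ := by
      have := hM.dotProduct_mulVec_pos hx₀ne
      simpa using this
    refine ⟨x₀ ⬝ᵥ M *ᵥ x₀, hc, fun x => ?_⟩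
    by_cases hx : x = 0
    · simp [hx]
    · have hxx : 0 < x ⬝ᵥ x := by
        rcases lt_or_eq_of_le (Finset.sum_nonneg fun i _ => mul_self_nonneg (x i) : (0:ℝ) ≤ x ⬝ᵥ x) with h | h
        · exact h
        · exact absurd ((dotProduct_self_eq_zero).mp h.symm) hx
      set t := Real.sqrt (x ⬝ᵥ x) with ht_def
      have ht : 0 < t := Real.sqrt_pos.mpr hxx
      have ht2 : t * t = x ⬝ᵥ x := Real.mul_self_sqrt hxx.le
      have hy : (t⁻¹ • x) ⬝ᵥ (t⁻¹ • x) = 1 := by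
        rw [smul_dotProduct, dotProduct_smul, smul_eq_mul, smul_eq_mul]
        field_simp
        nlinarith
      have hle : x₀ ⬝ᵥ M *ᵥ x₀ ≤ (t⁻¹ • x) ⬝ᵥ M *ᵥ (t⁻¹ • x) := hmin hy
      have hval : (t⁻¹ • x) ⬝ᵥ M *ᵥ (t⁻¹ • x) = t⁻¹ * (t⁻¹ * (x ⬝ᵥ M *ᵥ x)) := by
        rw [mulVec_smul, smul_dotProduct, dotProduct_smul, smul_eq_mul, smul_eq_mul]
      rw [hval] at hle
      have := mul_le_mul_of_nonneg_left hle (le_of_lt (mul_pos ht ht))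
      calc (x₀ ⬝ᵥ M *ᵥ x₀) * (x ⬝ᵥ x) = (t*t) * (x₀ ⬝ᵥ M *ᵥ x₀) := by rw [ht2]; ring
        _ ≤ (t*t) * (t⁻¹ * (t⁻¹ * (x ⬝ᵥ M *ᵥ x))) := this
        _ = x ⬝ᵥ M *ᵥ x := by field_simp



lemma young {k : ℕ} (s t : Fin k → ℝ) {ε : ℝ} (hε : 0 < ε) :
    2 * (s ⬝ᵥ t) ≤ ε * (s ⬝ᵥ s) + ε⁻¹ * (t ⬝ᵥ t) := by
  have hstep : ∀ i : Fin k, 2 * (s i * t i) ≤ ε * (s i * s i) + ε⁻¹ * (t i * t i) := by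
    intro i
    have h1 : 0 < ε⁻¹ := inv_pos.mpr hε
    have h2 : ε * ε⁻¹ = 1 := mul_inv_cancel₀ hε.ne'
    nlinarith [sq_nonneg (ε * s i - t i), sq_nonneg (s i - t i)]
  calc 2 * (s ⬝ᵥ t) = ∑ i, 2 * (s i * t i) := by simp [dotProduct, Finset.mul_sum]
    _ ≤ ∑ i, (ε * (s i * s i) + ε⁻¹ * (t i * t i)) := Finset.sum_le_sum fun i _ => hstep i
    _ = ε * (s ⬝ᵥ s) + ε⁻¹ * (t ⬝ᵥ t) := by
        simp [dotProduct, Finset.mul_sum, Finset.sum_add_distrib]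

lemma three_sum {k : ℕ} (a b c : Fin k → ℝ) :
    (a + b + c) ⬝ᵥ (a + b + c) ≤ 3 * (a ⬝ᵥ a + b ⬝ᵥ b + c ⬝ᵥ c) := by
  have hstep : ∀ i : Fin k, (a i + b i + c i) * (a i + b i + c i)
      ≤ 3 * (a i * a i) + 3 * (b i * b i) + 3 * (c i * c i) := fun i => by
    nlinarith [sq_nonneg (a i - b i), sq_nonneg (b i - c i), sq_nonneg (a i - c i)]
  calc (a + b + c) ⬝ᵥ (a + b + c)
      = ∑ i, (a i + b i + c i) * (a i + b i + c i) := by simp [dotProduct]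
    _ ≤ ∑ i, (3 * (a i * a i) + 3 * (b i * b i) + 3 * (c i * c i)) :=
        Finset.sum_le_sum fun i _ => hstep i
    _ = 3 * (a ⬝ᵥ a + b ⬝ᵥ b + c ⬝ᵥ c) := by
        simp only [dotProduct, Finset.mul_sum, mul_add, ← Finset.sum_add_distrib]

lemma quad_conj {k l : ℕ} (M : Matrix (Fin k) (Fin l) ℝ) (P : Matrix (Fin k) (Fin k) ℝ)
    (w : Fin l → ℝ) :
    (M *ᵥ w) ⬝ᵥ P *ᵥ (M *ᵥ w) = w ⬝ᵥ (Mᵀ * P * M) *ᵥ w := by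
  rw [← mulVec_mulVec, ← mulVec_mulVec, dotProduct_mulVec w, vecMul_transpose]

lemma q_eq_sqrt {k : ℕ} {P : Matrix (Fin k) (Fin k) ℝ} (hP : P.PosSemidef) (w : Fin k → ℝ) :
    w ⬝ᵥ P *ᵥ w = (hP.sqrt *ᵥ w) ⬝ᵥ (hP.sqrt *ᵥ w) := by
  show w ⬝ᵥ P *ᵥ w = (CFC.sqrt P *ᵥ w) ⬝ᵥ (CFC.sqrt P *ᵥ w)
  have hsym : (CFC.sqrt P)ᵀ = CFC.sqrt P := by
    have := (CFC.sqrt_nonneg P).posSemidef.1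
    rwa [Matrix.IsHermitian, conjTranspose_eq_transpose_of_trivial] at this
  conv_lhs => rw [← CFC.sqrt_mul_sqrt_self P hP.nonneg]
  rw [← mulVec_mulVec, dotProduct_mulVec, ← hsym, vecMul_transpose, hsym]

lemma posdef_smul {k : ℕ} {P : Matrix (Fin k) (Fin k) ℝ} (hP : P.PosDef) {α : ℝ} (hα : 0 < α) :
    (α • P).PosDef := by
  constructor
  · have h := hP.1
    simp only [Matrix.IsHermitian, conjTranspose_smul] at *
    rw [h]
    simp
  · exact (hP.smul hα).2


end IOSSAux

/-- existence of an IOSS Lyapunov function, equation (39) of the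
paper. If detectability is certified by an output-injection Lyapunov inequality
`(Ã - L C̃)ᵀ P₀ (Ã - L C̃) - P₀ ≺ 0` with `P₀ ≻ 0`, then there exist `P_W ≻ 0` and
constants `c_u, c_y, c_d > 0` such that `W(ξ) = ξᵀ P_W ξ` satisfies the IOSS
dissipation inequality
`W(ξ⁺) - W(ξ) ≤ -½‖ξ‖² + c_u‖u‖² + c_y‖y‖² + c_d‖d‖²`
along `ξ⁺ = Ã ξ + B̃ u + Ẽ d`, `y = C̃ ξ + D̃ u + d`. -/
theorem IOSS_Lyapunov_exists
    (n m p : ℕ)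
    (At : Matrix (Fin n) (Fin n) ℝ) (Bt : Matrix (Fin n) (Fin m) ℝ)
    (Et : Matrix (Fin n) (Fin p) ℝ)
    (Ct : Matrix (Fin p) (Fin n) ℝ) (Dt : Matrix (Fin p) (Fin m) ℝ)
    (L : Matrix (Fin n) (Fin p) ℝ) (P0 : Matrix (Fin n) (Fin n) ℝ)
    (hP0 : P0.PosDef)
    (hdet : (-((At - L * Ct)ᵀ * P0 * (At - L * Ct) - P0)).PosDef) :
    ∃ PW : Matrix (Fin n) (Fin n) ℝ, PW.PosDef ∧
      ∃ cu cy cd : ℝ, 0 < cu ∧ 0 < cy ∧ 0 < cd ∧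
        ∀ (ξ : Fin n → ℝ) (u : Fin m → ℝ) (d : Fin p → ℝ),
          (At.mulVec ξ + Bt.mulVec u + Et.mulVec d) ⬝ᵥ
              PW.mulVec (At.mulVec ξ + Bt.mulVec u + Et.mulVec d)
            - ξ ⬝ᵥ PW.mulVec ξ
          ≤ -(1 / 2) * (ξ ⬝ᵥ ξ) + cu * (u ⬝ᵥ u)
            + cy * ((Ct.mulVec ξ + Dt.mulVec u + d) ⬝ᵥ (Ct.mulVec ξ + Dt.mulVec u + d))
            + cd * (d ⬝ᵥ d) := by
  classical
  set AL := At - L * Ct with hAL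
  set B' := Bt - L * Dt with hB'
  set E' := Et - L with hE'
  have hPS : P0.PosSemidef := hP0.posSemidef
  obtain ⟨cQ, hcQ, hQ⟩ := IOSSAux.quad_lower hdet
  obtain ⟨CA, hCA0, hCA⟩ := IOSSAux.quad_upper (ALᵀ * P0 * AL)
  obtain ⟨Cu, hCu0, hCu⟩ := IOSSAux.quad_upper (B'ᵀ * P0 * B')
  obtain ⟨Cy, hCy0, hCy⟩ := IOSSAux.quad_upper (Lᵀ * P0 * L)
  obtain ⟨Cd, hCd0, hCd⟩ := IOSSAux.quad_upper (E'ᵀ * P0 * E')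
  set ε : ℝ := cQ / (2 * (CA + 1)) with hε_def
  have hε : 0 < ε := div_pos hcQ (by linarith)
  have hεinv : 0 < ε⁻¹ := inv_pos.mpr hε
  set α : ℝ := cQ⁻¹ with hα_def
  have hα : 0 < α := inv_pos.mpr hcQ
  set K : ℝ := α * (3 * (1 + ε⁻¹)) with hK_def
  have hK : 0 < K := mul_pos hα (by nlinarith)
  refine ⟨α • P0, IOSSAux.posdef_smul hP0 hα, K * (Cu + 1), K * (Cy + 1), K * (Cd + 1),
    mul_pos hK (by linarith), mul_pos hK (by linarith), mul_pos hK (by linarith),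
    fun ξ u d => ?_⟩
  set y := Ct *ᵥ ξ + Dt *ᵥ u + d with hy
  set a := AL *ᵥ ξ with ha
  set v := B' *ᵥ u + E' *ᵥ d + L *ᵥ y with hv
  have huu := IOSSAux.dot_self_nonneg u
  have hdd := IOSSAux.dot_self_nonneg d
  have hyy := IOSSAux.dot_self_nonneg y
  have hξξ := IOSSAux.dot_self_nonneg ξ
  have hsplit : At *ᵥ ξ + Bt *ᵥ u + Et *ᵥ d = a + v := by
    rw [ha, hv, hy, hAL, hB', hE']
    simp only [sub_mulVec, mulVec_add, mulVec_mulVec]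
    abel
  have key1 : (a + v) ⬝ᵥ P0 *ᵥ (a + v)
      ≤ (1 + ε) * (a ⬝ᵥ P0 *ᵥ a) + (1 + ε⁻¹) * (v ⬝ᵥ P0 *ᵥ v) := by
    rw [IOSSAux.q_eq_sqrt hPS (a + v), IOSSAux.q_eq_sqrt hPS a, IOSSAux.q_eq_sqrt hPS v,
      mulVec_add]
    have hy2 := IOSSAux.young (hPS.sqrt *ᵥ a) (hPS.sqrt *ᵥ v) hε
    have expand : (hPS.sqrt *ᵥ a + hPS.sqrt *ᵥ v) ⬝ᵥ (hPS.sqrt *ᵥ a + hPS.sqrt *ᵥ v)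
        = (hPS.sqrt *ᵥ a) ⬝ᵥ (hPS.sqrt *ᵥ a) + 2 * ((hPS.sqrt *ᵥ a) ⬝ᵥ (hPS.sqrt *ᵥ v))
          + (hPS.sqrt *ᵥ v) ⬝ᵥ (hPS.sqrt *ᵥ v) := by
      rw [add_dotProduct, dotProduct_add, dotProduct_add,
        dotProduct_comm (hPS.sqrt *ᵥ v) (hPS.sqrt *ᵥ a)]
      ring
    rw [expand]
    linarith
  have key2 : v ⬝ᵥ P0 *ᵥ v
      ≤ 3 * (Cu * (u ⬝ᵥ u) + Cd * (d ⬝ᵥ d) + Cy * (y ⬝ᵥ y)) := by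
    rw [IOSSAux.q_eq_sqrt hPS v, hv, mulVec_add, mulVec_add]
    refine le_trans (IOSSAux.three_sum _ _ _) ?_
    have t1 : (hPS.sqrt *ᵥ (B' *ᵥ u)) ⬝ᵥ (hPS.sqrt *ᵥ (B' *ᵥ u)) ≤ Cu * (u ⬝ᵥ u) := by
      rw [← IOSSAux.q_eq_sqrt hPS, IOSSAux.quad_conj]; exact hCu u
    have t2 : (hPS.sqrt *ᵥ (E' *ᵥ d)) ⬝ᵥ (hPS.sqrt *ᵥ (E' *ᵥ d)) ≤ Cd * (d ⬝ᵥ d) := by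
      rw [← IOSSAux.q_eq_sqrt hPS, IOSSAux.quad_conj]; exact hCd d
    have t3 : (hPS.sqrt *ᵥ (L *ᵥ y)) ⬝ᵥ (hPS.sqrt *ᵥ (L *ᵥ y)) ≤ Cy * (y ⬝ᵥ y) := by
      rw [← IOSSAux.q_eq_sqrt hPS, IOSSAux.quad_conj]; exact hCy y
    linarith
  have h2 : a ⬝ᵥ P0 *ᵥ a ≤ CA * (ξ ⬝ᵥ ξ) := by
    rw [ha, IOSSAux.quad_conj]; exact hCA ξ
  have key3 : (1 + ε) * (a ⬝ᵥ P0 *ᵥ a) - ξ ⬝ᵥ P0 *ᵥ ξ ≤ -(cQ / 2) * (ξ ⬝ᵥ ξ) := by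
    have h1 : cQ * (ξ ⬝ᵥ ξ) ≤ ξ ⬝ᵥ P0 *ᵥ ξ - a ⬝ᵥ P0 *ᵥ a := by
      have hq := hQ ξ
      have e : ξ ⬝ᵥ (-(ALᵀ * P0 * AL - P0)) *ᵥ ξ
          = ξ ⬝ᵥ P0 *ᵥ ξ - ξ ⬝ᵥ (ALᵀ * P0 * AL) *ᵥ ξ := by
        rw [neg_mulVec, dotProduct_neg, sub_mulVec, dotProduct_sub]; ring
      rw [e] at hq
      rw [ha, IOSSAux.quad_conj]
      linarith
    have hεCA : ε * CA ≤ cQ / 2 := by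
      have hεe : ε * (2 * (CA + 1)) = cQ := by
        rw [hε_def]; field_simp
      nlinarith
    have hεa : ε * (a ⬝ᵥ P0 *ᵥ a) ≤ (cQ / 2) * (ξ ⬝ᵥ ξ) :=
      calc ε * (a ⬝ᵥ P0 *ᵥ a) ≤ ε * (CA * (ξ ⬝ᵥ ξ)) := mul_le_mul_of_nonneg_left h2 hε.le
        _ = (ε * CA) * (ξ ⬝ᵥ ξ) := by ring
        _ ≤ (cQ / 2) * (ξ ⬝ᵥ ξ) := mul_le_mul_of_nonneg_right hεCA hξξ
    linarith
  have hmain : (a + v) ⬝ᵥ P0 *ᵥ (a + v) - ξ ⬝ᵥ P0 *ᵥ ξ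
      ≤ -(cQ / 2) * (ξ ⬝ᵥ ξ)
        + (1 + ε⁻¹) * (3 * (Cu * (u ⬝ᵥ u) + Cd * (d ⬝ᵥ d) + Cy * (y ⬝ᵥ y))) := by
    have h3 : (1 + ε⁻¹) * (v ⬝ᵥ P0 *ᵥ v)
        ≤ (1 + ε⁻¹) * (3 * (Cu * (u ⬝ᵥ u) + Cd * (d ⬝ᵥ d) + Cy * (y ⬝ᵥ y))) :=
      mul_le_mul_of_nonneg_left key2 (by linarith)
    linarith
  rw [hsplit]
  simp only [smul_mulVec, dotProduct_smul, smul_eq_mul]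
  have hαc : α * (cQ / 2) = 1 / 2 := by
    rw [hα_def]; field_simp
  have step : α * ((a + v) ⬝ᵥ P0 *ᵥ (a + v)) - α * (ξ ⬝ᵥ P0 *ᵥ ξ)
      ≤ α * (-(cQ / 2) * (ξ ⬝ᵥ ξ)
        + (1 + ε⁻¹) * (3 * (Cu * (u ⬝ᵥ u) + Cd * (d ⬝ᵥ d) + Cy * (y ⬝ᵥ y)))) := by
    have := mul_le_mul_of_nonneg_left hmain hα.le
    linarith [this]
  refine le_trans step ?_
  have e1 : α * (-(cQ / 2) * (ξ ⬝ᵥ ξ)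
        + (1 + ε⁻¹) * (3 * (Cu * (u ⬝ᵥ u) + Cd * (d ⬝ᵥ d) + Cy * (y ⬝ᵥ y))))
      = -(1 / 2) * (ξ ⬝ᵥ ξ) + (K * Cu) * (u ⬝ᵥ u) + (K * Cy) * (y ⬝ᵥ y)
        + (K * Cd) * (d ⬝ᵥ d) := by
    have h5 : α * ((cQ / 2) * (ξ ⬝ᵥ ξ)) = (1 / 2) * (ξ ⬝ᵥ ξ) := by
      rw [← hαc]; ring
    rw [hK_def]
    linear_combination -h5
  rw [e1]
  have b1 : (K * Cu) * (u ⬝ᵥ u) ≤ (K * (Cu + 1)) * (u ⬝ᵥ u) :=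
    mul_le_mul_of_nonneg_right (mul_le_mul_of_nonneg_left (by linarith) hK.le) huu
  have b2 : (K * Cy) * (y ⬝ᵥ y) ≤ (K * (Cy + 1)) * (y ⬝ᵥ y) :=
    mul_le_mul_of_nonneg_right (mul_le_mul_of_nonneg_left (by linarith) hK.le) hyy
  have b3 : (K * Cd) * (d ⬝ᵥ d) ≤ (K * (Cd + 1)) * (d ⬝ᵥ d) :=
    mul_le_mul_of_nonneg_right (mul_le_mul_of_nonneg_left (by linarith) hK.le) hdd
  linarith
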